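/- Let a, δ, m, n be positive integers with m < n, a ≥ 2, and aδ dividing both m and n. Let E ∈ ℂ[x,y] satisfy N⁰(E) = T_{m/(aδ), n/(aδ)} with the coefficient of x^{m/(aδ)} y^{n/(aδ)} equal to 1, and let α ∈ ℂ[z] be a monic polynomial of degree k ≥ 1. Suppose supp(F − α(E)) ⊆ N⁰(F) \ 𝒩'' where N⁰(F) = T_{m,n} and 𝒩'' = T_{m/a,n/a} + ((a−1)/a)(m,n) (a nonempty region inside T_{m,n}). Then k = aδ. -/

import Mathlib

open MvPolynomial
open Pointwise

noncomputable section

abbrev R2 : Type := MvPolynomial (Fin 2) ℂ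

/-- The (0,1)-homogeneous component of `f` of degree `j` (terms with y-exponent `j`). -/
def comp01 (f : R2) (j : ℕ) : R2 :=
  ∑ d ∈ f.support.filter (fun d => d 1 = j), MvPolynomial.monomial d (f.coeff d)

/-- The total-degree (i.e. (1,1)-)homogeneous component of `f` of degree `j`. -/
def comp11 (f : R2) (j : ℕ) : R2 :=
  ∑ d ∈ f.support.filter (fun d => d 0 + d 1 = j), MvPolynomial.monomial d (f.coeff d)

/-- The exponent vector of a monomial, as a point of `ℝ²`. -/
def toR2pt (d : Fin 2 →₀ ℕ) : ℝ × ℝ := ((d 0 : ℝ), (d 1 : ℝ))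

/-- The support of `f`, as a subset of `ℝ²`. -/
def suppSet (f : R2) : Set (ℝ × ℝ) := toR2pt '' (f.support : Set (Fin 2 →₀ ℕ))

/-- The augmented Newton polygon `N⁰(f)`: convex hull of the support together with the origin. -/
def newton0 (f : R2) : Set (ℝ × ℝ) := convexHull ℝ (insert (0, 0) (suppSet f))

/-- The trapezoid `T_{m,n}` with vertices `(0,0), (m+n,0), (m,n), (0,n)`. -/
def Tset (m n : ℝ) : Set (ℝ × ℝ) := {p | 0 ≤ p.2 ∧ p.2 ≤ n ∧ 0 ≤ p.1 ∧ p.1 ≤ m + n - p.2}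

/-- The region `𝒩'' = T_{m/a, n/a} + ((a-1)/a)·(m,n)`. -/
def NsetPP (m n a : ℕ) : Set (ℝ × ℝ) :=
  (fun p : ℝ × ℝ => (p.1 + ((a : ℝ) - 1) * m / a, p.2 + ((a : ℝ) - 1) * n / a)) ''
    Tset ((m : ℝ) / a) ((n : ℝ) / a)

/-- The Jacobian determinant `[f,g] = f_x g_y - f_y g_x`. -/
def jacDet (f g : R2) : R2 :=
  pderiv 0 f * pderiv 1 g - pderiv 1 f * pderiv 0 g

abbrev dpt (A B : ℕ) : Fin 2 →₀ ℕ := Finsupp.single 0 A + Finsupp.single 1 B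

lemma dpt0 (A B : ℕ) : dpt A B 0 = A := by simp [dpt]
lemma dpt1 (A B : ℕ) : dpt A B 1 = B := by simp [dpt]

lemma fin2_ext {d e : Fin 2 →₀ ℕ} (h0 : d 0 = e 0) (h1 : d 1 = e 1) : d = e :=
  Finsupp.ext fun i => by fin_cases i <;> assumption

lemma pow_bound (E : MvPolynomial (Fin 2) ℂ) (m' n' : ℕ)
    (hE : ∀ d ∈ E.support, d 1 ≤ n' ∧ (d 1 = n' → d 0 ≤ m')) (j : ℕ) :
    ∀ d ∈ (E ^ j).support, d 1 ≤ j * n' ∧ (d 1 = j * n' → d 0 ≤ j * m') := by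
  induction j with
  | zero =>
    intro d hd
    have h1 := MvPolynomial.mem_support_iff.mp hd
    rw [pow_zero, MvPolynomial.coeff_one] at h1
    by_cases h : (0 : Fin 2 →₀ ℕ) = d
    · subst h; simp
    · simp [h] at h1
  | succ j ih =>
    intro d hd
    rw [pow_succ] at hd
    obtain ⟨u, hu, v, hv, rfl⟩ := Finset.mem_add.mp (MvPolynomial.support_mul _ _ hd)
    obtain ⟨hu1, hu0⟩ := ih u hu
    obtain ⟨hv1, hv0⟩ := hE v hv
    have e1 : (u + v) 1 = u 1 + v 1 := rfl
    have e0 : (u + v) 0 = u 0 + v 0 := rfl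
    have em : (j + 1) * n' = j * n' + n' := by ring
    have em' : (j + 1) * m' = j * m' + m' := by ring
    constructor
    · rw [e1, em]; exact add_le_add hu1 hv1
    · intro h
      rw [e1, em] at h
      have h1 : u 1 = j * n' := by omega
      have h2 : v 1 = n' := by omega
      rw [e0, em']
      exact add_le_add (hu0 h1) (hv0 h2)

lemma pow_top (E : MvPolynomial (Fin 2) ℂ) (m' n' : ℕ)
    (hE : ∀ d ∈ E.support, d 1 ≤ n' ∧ (d 1 = n' → d 0 ≤ m'))
    (htop : MvPolynomial.coeff (dpt m' n') E = 1) (j : ℕ) :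
    MvPolynomial.coeff (dpt (j * m') (j * n')) (E ^ j) = 1 := by
  induction j with
  | zero => simp [dpt]
  | succ j ih =>
    rw [pow_succ, MvPolynomial.coeff_mul]
    rw [Finset.sum_eq_single_of_mem
      ((dpt (j * m') (j * n'), dpt m' n') : (Fin 2 →₀ ℕ) × (Fin 2 →₀ ℕ))]
    · rw [ih, htop, one_mul]
    · rw [Finset.HasAntidiagonal.mem_antidiagonal]
      refine fin2_ext ?_ ?_ <;> simp [Finsupp.single_apply] <;> ring
    · rintro ⟨u, v⟩ hmem hne
      by_contra hne0
      have hcu : MvPolynomial.coeff u (E ^ j) ≠ 0 := fun h => hne0 (by simp [h])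
      have hcv : MvPolynomial.coeff v E ≠ 0 := fun h => hne0 (by simp [h])
      obtain ⟨hu1, hu0⟩ := pow_bound E m' n' hE j u (MvPolynomial.mem_support_iff.mpr hcu)
      obtain ⟨hv1, hv0⟩ := hE v (MvPolynomial.mem_support_iff.mpr hcv)
      have hsum := Finset.HasAntidiagonal.mem_antidiagonal.mp hmem
      have h1 : u 1 + v 1 = j * n' + n' := by
        have h := congrArg (fun f : Fin 2 →₀ ℕ => f 1) hsum
        simp [Finsupp.single_apply] at h
        rw [h]; ring
      have h0 : u 0 + v 0 = j * m' + m' := by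
        have h := congrArg (fun f : Fin 2 →₀ ℕ => f 0) hsum
        simp [Finsupp.single_apply] at h
        rw [h]; ring
      have hu1' : u 1 = j * n' := by omega
      have hv1' : v 1 = n' := by omega
      have hu0b : u 0 ≤ j * m' := hu0 hu1'
      have hv0b : v 0 ≤ m' := hv0 hv1'
      have hu0' : u 0 = j * m' := by omega
      have hv0' : v 0 = m' := by omega
      exact hne (Prod.ext
        (fin2_ext (by rw [dpt0]; exact hu0') (by rw [dpt1]; exact hu1'))
        (fin2_ext (by rw [dpt0]; exact hv0') (by rw [dpt1]; exact hv1')))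

lemma pow_vanish (E : MvPolynomial (Fin 2) ℂ) (m' n' : ℕ)
    (hE : ∀ d ∈ E.support, d 1 ≤ n' ∧ (d 1 = n' → d 0 ≤ m')) (j : ℕ)
    (d : Fin 2 →₀ ℕ) (h : j * n' < d 1) : MvPolynomial.coeff d (E ^ j) = 0 := by
  by_contra h0
  exact absurd h (not_lt.mpr (pow_bound E m' n' hE j d (MvPolynomial.mem_support_iff.mpr h0)).1)

/-- in the setting of Lemma `Ecirctopdegpieces`(ii), `deg α = aδ`. -/
theorem stmt17 (a δ m n k : ℕ) (ha : 2 ≤ a) (hδ : 0 < δ) (hm : 0 < m) (hmn : m < n)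
    (hdm : a * δ ∣ m) (hdn : a * δ ∣ n) (hk : 1 ≤ k) (E F : R2)
    (hNE : newton0 E = Tset ((m : ℝ) / (a * δ)) ((n : ℝ) / (a * δ)))
    (hcoef : MvPolynomial.coeff
      (Finsupp.single 0 (m / (a * δ)) + Finsupp.single 1 (n / (a * δ))) E = 1)
    (α : Polynomial ℂ) (hmon : α.Monic) (hdeg : α.natDegree = k)
    (hNF : newton0 F = Tset (m : ℝ) (n : ℝ))
    (hsupp : suppSet (F - Polynomial.aeval E α) ⊆
      Tset (m : ℝ) (n : ℝ) \ NsetPP m n a) :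
    k = a * δ := by
  set M := a * δ with hMdef
  have hMpos : 0 < M := Nat.mul_pos (by omega) hδ
  set m' := m / M with hm'def
  set n' := n / M with hn'def
  have hmM : M * m' = m := Nat.mul_div_cancel' hdm
  have hnM : M * n' = n := Nat.mul_div_cancel' hdn
  have hnpos : 0 < n := lt_trans hm hmn
  have hn' : 0 < n' := by
    rcases Nat.eq_zero_or_pos n' with h | h
    · rw [h, Nat.mul_zero] at hnM; omega
    · exact h
  have hMr : ((a : ℝ) * (δ : ℝ)) = (M : ℝ) := by rw [hMdef]; push_cast; ring
  have hMne : (M : ℝ) ≠ 0 := by exact_mod_cast hMpos.ne'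
  have hmr : (m : ℝ) / ((a : ℝ) * δ) = (m' : ℝ) := by
    rw [hMr, ← hmM]; push_cast; field_simp
  have hnr : (n : ℝ) / ((a : ℝ) * δ) = (n' : ℝ) := by
    rw [hMr, ← hnM]; push_cast; field_simp
  rw [hmr, hnr] at hNE
  have hsubE : suppSet E ⊆ Tset (m' : ℝ) (n' : ℝ) := by
    rw [← hNE]
    exact fun p hp => subset_convexHull ℝ _ (Set.mem_insert_iff.mpr (Or.inr hp))
  have hsubF : suppSet F ⊆ Tset (m : ℝ) (n : ℝ) := by
    rw [← hNF]
    exact fun p hp => subset_convexHull ℝ _ (Set.mem_insert_iff.mpr (Or.inr hp))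
  have hEb : ∀ d ∈ E.support, d 1 ≤ n' ∧ (d 1 = n' → d 0 ≤ m') := by
    intro d hd
    obtain ⟨h1, h2, h3, h4⟩ := hsubE ⟨d, hd, rfl⟩
    simp only [toR2pt] at h1 h2 h3 h4
    constructor
    · exact_mod_cast h2
    · intro he
      have hc : ((d 1 : ℕ) : ℝ) = (n' : ℝ) := by exact_mod_cast congrArg (Nat.cast (R := ℝ)) he
      rw [hc] at h4
      have : (d 0 : ℝ) ≤ (m' : ℝ) := by linarith
      exact_mod_cast this
  have hcoefα : ∀ d, MvPolynomial.coeff d (Polynomial.aeval E α) =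
      ∑ i ∈ Finset.range (k + 1), α.coeff i * MvPolynomial.coeff d (E ^ i) := by
    intro d
    rw [Polynomial.aeval_eq_sum_range (p := α) E, hdeg, MvPolynomial.coeff_sum]
    exact Finset.sum_congr rfl fun i _ => by rw [MvPolynomial.coeff_smul]; rfl
  have htopk : α.coeff k = 1 := by rw [← hdeg]; exact hmon.coeff_natDegree
  rcases lt_trichotomy k M with hlt | heq | hgt
  · -- case k < M : use the corner (m, n)
    exfalso
    have hdd1 : dpt m n 1 = n := dpt1 m n
    have hαdd : MvPolynomial.coeff (dpt m n) (Polynomial.aeval E α) = 0 := by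
      rw [hcoefα]
      apply Finset.sum_eq_zero
      intro i hi
      have hi' : i ≤ k := by rw [Finset.mem_range] at hi; omega
      have hlt' : i * n' < (dpt m n) 1 := by
        rw [hdd1]
        calc i * n' ≤ k * n' := Nat.mul_le_mul hi' (le_refl n')
          _ < M * n' := mul_lt_mul_of_pos_right hlt hn'
          _ = n := hnM
      exact mul_eq_zero_of_right _ (pow_vanish E m' n' hEb i _ hlt')
    have hmreal : (0 : ℝ) < m := by exact_mod_cast hm
    have hnreal : (0 : ℝ) < n := by exact_mod_cast hnpos
    have hFdd : MvPolynomial.coeff (dpt m n) F ≠ 0 := by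
      intro h0
      have hhull : ((m : ℝ), (n : ℝ)) ∈ convexHull ℝ (insert ((0:ℝ), (0:ℝ)) (suppSet F)) := by
        have hTmem : ((m : ℝ), (n : ℝ)) ∈ Tset (m : ℝ) (n : ℝ) :=
          ⟨le_of_lt hnreal, le_refl _, le_of_lt hmreal, by simp⟩
        rw [← hNF] at hTmem
        exact hTmem
      have hlin : IsLinearMap ℝ (fun p : ℝ × ℝ => (n : ℝ) * p.1 + ((m : ℝ) + n) * p.2) :=
        ⟨by intro x y; simp only [Prod.fst_add, Prod.snd_add]; ring,
         by intro c x; simp only [Prod.smul_fst, Prod.smul_snd, smul_eq_mul]; ring⟩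
      have hsub : insert ((0:ℝ), (0:ℝ)) (suppSet F) ⊆
          {p : ℝ × ℝ | (n : ℝ) * p.1 + ((m : ℝ) + n) * p.2 < 2 * m * n + n ^ 2} := by
        rintro p (rfl | ⟨d, hd, rfl⟩)
        · simp only [Set.mem_setOf_eq]; nlinarith
        · obtain ⟨h1, h2, h3, h4⟩ := hsubF ⟨d, hd, rfl⟩
          simp only [toR2pt] at h1 h2 h3 h4 ⊢
          simp only [Set.mem_setOf_eq]
          have hne : ¬((d 0 : ℝ) = m ∧ (d 1 : ℝ) = n) := by
            rintro ⟨ha', hb'⟩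
            have hd0 : d 0 = m := by exact_mod_cast ha'
            have hd1 : d 1 = n := by exact_mod_cast hb'
            have : d = dpt m n := fin2_ext (by rw [dpt0]; exact hd0) (by rw [dpt1]; exact hd1)
            exact (MvPolynomial.mem_support_iff.mp hd) (this ▸ h0)
          rcases lt_or_eq_of_le h2 with hy | hy
          · nlinarith
          · have hx : (d 0 : ℝ) < m := by
              rcases lt_or_eq_of_le (show (d 0 : ℝ) ≤ m by rw [← hy] at h4; linarith) with h | h
              · exact h
              · exact absurd ⟨h, hy⟩ hne
            nlinarith
      have hmem := convexHull_min hsub (convex_halfSpace_lt hlin _) hhull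
      simp only [Set.mem_setOf_eq] at hmem
      nlinarith
    have hmem : toR2pt (dpt m n) ∈ suppSet (F - Polynomial.aeval E α) := by
      refine ⟨dpt m n, MvPolynomial.mem_support_iff.mpr ?_, rfl⟩
      rw [MvPolynomial.coeff_sub, hαdd, sub_zero]
      exact hFdd
    have hnotin := (hsupp hmem).2
    apply hnotin
    have hpt : toR2pt (dpt m n) = ((m : ℝ), (n : ℝ)) := by
      simp only [toR2pt, dpt0, dpt1]
    rw [hpt]
    have hareal : (0 : ℝ) < a := by exact_mod_cast (show 0 < a by omega)
    refine ⟨((m : ℝ) / a, (n : ℝ) / a), ⟨by positivity, le_refl _, by positivity, by simp⟩, ?_⟩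
    have hane : (a : ℝ) ≠ 0 := hareal.ne'
    refine Prod.ext ?_ ?_ <;> simp only <;> field_simp <;> ring
  · exact heq
  · -- case k > M : use the corner (k m', k n')
    exfalso
    have hy : n < k * n' := by
      calc n = M * n' := hnM.symm
        _ < k * n' := mul_lt_mul_of_pos_right hgt hn'
    have hFstar : MvPolynomial.coeff (dpt (k * m') (k * n')) F = 0 := by
      by_contra h0
      obtain ⟨h1, h2, h3, h4⟩ := hsubF ⟨_, MvPolynomial.mem_support_iff.mpr h0, rfl⟩
      simp only [toR2pt, dpt0, dpt1] at h2
      have : k * n' ≤ n := by exact_mod_cast h2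
      omega
    have hαstar : MvPolynomial.coeff (dpt (k * m') (k * n')) (Polynomial.aeval E α) = 1 := by
      rw [hcoefα]
      rw [Finset.sum_eq_single_of_mem k (Finset.self_mem_range_succ k)]
      · rw [pow_top E m' n' hEb hcoef k, htopk, one_mul]
      · intro i hi hne
        have hi' : i < k := by rw [Finset.mem_range] at hi; omega
        have hlt' : i * n' < (dpt (k * m') (k * n')) 1 := by
          rw [dpt1]
          exact mul_lt_mul_of_pos_right hi' hn'
        exact mul_eq_zero_of_right _ (pow_vanish E m' n' hEb i _ hlt')
    have hmem : toR2pt (dpt (k * m') (k * n')) ∈ suppSet (F - Polynomial.aeval E α) := by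
      refine ⟨_, MvPolynomial.mem_support_iff.mpr ?_, rfl⟩
      rw [MvPolynomial.coeff_sub, hFstar, hαstar]
      norm_num
    obtain ⟨h1, h2, h3, h4⟩ := (hsupp hmem).1
    simp only [toR2pt, dpt0, dpt1] at h2
    have : k * n' ≤ n := by exact_mod_cast h2
    omega
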